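/- Let n be even and let A, R ⊆ {1,…,n} with |A| = |R| = n/2. Define the perfect matching m : {1,…,n} → {1,…,n} by: m restricted to R is the unique increasing bijection from R onto A, and m restricted to {1,…,n}∖R is the unique increasing bijection from {1,…,n}∖R onto {1,…,n}∖A. Then for every i ∈ {1,…,n}, the matched pair (i, m⁻¹(i)) is satisfied if and only if |R ∩ {1,…,i−1}| = |A ∩ {1,…,i−1}| and |R ∩ {i+1,…,n}| = |A ∩ {i+1,…,n}|. -/

import Mathlib

/-- Girl `i` is satisfied under the perfect matching `m` (a permutation of `Fin n`,
boys and girls both indexed in decreasing order of preference) if `m j < i`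
for every boy `j < m⁻¹ i`. -/
def girlSatisfied {n : ℕ} (m : Equiv.Perm (Fin n)) (i : Fin n) : Prop :=
  ∀ j : Fin n, j < m.symm i → m j < i

/-- Boy `j` is satisfied under `m` if `m⁻¹ i < j` for every girl `i < m j`. -/
def boySatisfied {n : ℕ} (m : Equiv.Perm (Fin n)) (j : Fin n) : Prop :=
  ∀ i : Fin n, i < m j → m.symm i < j

namespace PairSatisfiedAux
variable {n : ℕ}

lemma rank_le {S : Finset (Fin n)} {a b : Fin n} (h : a ≤ b) :
    (S.filter (fun x => x < a)).card ≤ (S.filter (fun x => x < b)).card :=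
  Finset.card_le_card (Finset.monotone_filter_right S (fun x _ hx => lt_of_lt_of_le hx h))

lemma rank_lt {S : Finset (Fin n)} {a b : Fin n} (ha : a ∈ S) (h : a < b) :
    (S.filter (fun x => x < a)).card < (S.filter (fun x => x < b)).card := by
  refine Finset.card_lt_card ⟨Finset.monotone_filter_right S (fun x _ hx => lt_trans hx h),
    fun hsub => ?_⟩
  have := Finset.mem_filter.mp (hsub (Finset.mem_filter.mpr ⟨ha, h⟩))
  exact absurd this.2 (lt_irrefl a)

lemma lt_of_rank_lt {S : Finset (Fin n)} {a b : Fin n}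
    (h : (S.filter (fun x => x < a)).card < (S.filter (fun x => x < b)).card) : a < b := by
  by_contra hab
  push_neg at hab
  exact absurd (rank_le hab) (not_le.mpr h)

lemma rank_inj {S : Finset (Fin n)} {a b : Fin n} (ha : a ∈ S) (hb : b ∈ S)
    (h : (S.filter (fun x => x < a)).card = (S.filter (fun x => x < b)).card) : a = b := by
  rcases lt_trichotomy a b with hlt | heq | hgt
  · exact absurd (rank_lt ha hlt) (by omega)
  · exact heq
  · exact absurd (rank_lt hb hgt) (by omega)

/-- rank is preserved by an increasing bijection from `R` onto `A`. -/
lemma rank_map {m : Equiv.Perm (Fin n)} {R A : Finset (Fin n)}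
    (hmono : StrictMonoOn m ↑R) (himg : R.image m = A) {x : Fin n} (hx : x ∈ R) :
    (R.filter (fun y => y < x)).card = (A.filter (fun y => y < m x)).card := by
  have himg2 : (R.filter (fun y => y < x)).image m = A.filter (fun y => y < m x) := by
    rw [← himg, Finset.filter_image]
    congr 1
    apply Finset.filter_congr
    intro y hy
    exact (hmono.lt_iff_lt hy hx).symm
  rw [← himg2, Finset.card_image_of_injective _ m.injective]

lemma card_split (S : Finset (Fin n)) (i : Fin n) :
    S.card = (S.filter (fun x => x < i)).card + (if i ∈ S then 1 else 0)
      + (S.filter (fun x => i < x)).card := by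
  have h1 : S.filter (fun x => x = i) = if i ∈ S then {i} else ∅ := Finset.filter_eq' S i
  have hu : S = (S.filter (fun x => x < i)) ∪ (S.filter (fun x => x = i))
      ∪ (S.filter (fun x => i < x)) := by
    ext x
    simp only [Finset.mem_union, Finset.mem_filter]
    constructor
    · intro hx
      rcases lt_trichotomy x i with h | h | h
      · exact Or.inl (Or.inl ⟨hx, h⟩)
      · exact Or.inl (Or.inr ⟨hx, h⟩)
      · exact Or.inr ⟨hx, h⟩
    · rintro ((⟨hx, _⟩ | ⟨hx, _⟩) | ⟨hx, _⟩) <;> exact hx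
  have hd1 : Disjoint ((S.filter (fun x => x < i)) ∪ (S.filter (fun x => x = i)))
      (S.filter (fun x => i < x)) := by
    simp only [Finset.disjoint_left, Finset.mem_union, Finset.mem_filter]
    rintro x (⟨_, h⟩ | ⟨_, h⟩) ⟨_, h'⟩
    · exact absurd (lt_trans h h') (lt_irrefl x)
    · subst h; exact absurd h' (lt_irrefl x)
  have hd2 : Disjoint (S.filter (fun x => x < i)) (S.filter (fun x => x = i)) := by
    simp only [Finset.disjoint_left, Finset.mem_filter]
    rintro x ⟨_, h⟩ ⟨_, rfl⟩
    exact absurd h (lt_irrefl x)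
  conv_lhs => rw [hu]
  rw [Finset.card_union_of_disjoint hd1, Finset.card_union_of_disjoint hd2, h1]
  split_ifs <;> simp [Nat.add_assoc, Nat.add_comm]

lemma card_compl_filter (R : Finset (Fin n)) (p : Fin n → Prop) [DecidablePred p] :
    (Rᶜ.filter p).card = (Finset.univ.filter p).card - (R.filter p).card := by
  have hu : (R.filter p) ∪ (Rᶜ.filter p) = Finset.univ.filter p := by
    rw [← Finset.filter_union, Finset.union_compl]
  have hd : Disjoint (R.filter p) (Rᶜ.filter p) :=
    Finset.disjoint_filter_filter disjoint_compl_right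
  have := Finset.card_union_of_disjoint hd
  rw [hu] at this
  omega

lemma card_univ_filter_lt (i : Fin n) :
    (Finset.univ.filter (fun x => x < i)).card = i.val := by
  have : Finset.univ.filter (fun x => x < i) = Finset.Iio i := by ext x; simp
  rw [this, Fin.card_Iio]

end PairSatisfiedAux

open PairSatisfiedAux

/-- Let `n` be even, `A, R` sets of size `n/2`, and let `m` be the matching that is
the unique increasing bijection from `R` onto `A` and from `Rᶜ` onto `Aᶜ`.
Then the matched pair of girl `i` is satisfied iff
`|R ∩ {x < i}| = |A ∩ {x < i}|` and `|R ∩ {x > i}| = |A ∩ {x > i}|`. -/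
theorem pair_satisfied_iff_counts (n : ℕ) (hn : Even n)
    (A R : Finset (Fin n)) (hA : A.card = n / 2) (hR : R.card = n / 2)
    (m : Equiv.Perm (Fin n))
    (hmono : StrictMonoOn m ↑R) (himg : R.image m = A)
    (hmono' : StrictMonoOn m ↑Rᶜ) (himg' : Rᶜ.image m = Aᶜ) :
    ∀ i : Fin n,
      (girlSatisfied m i ∧ boySatisfied m (m.symm i)) ↔
        ((R.filter (fun x => x < i)).card = (A.filter (fun x => x < i)).card ∧
         (R.filter (fun x => i < x)).card = (A.filter (fun x => i < x)).card) := by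
  intro i
  have memA : ∀ x, x ∈ R → m x ∈ A := fun x hx => himg ▸ Finset.mem_image_of_mem m hx
  have memA' : ∀ x, x ∉ R → m x ∉ A := by
    intro x hx
    have : m x ∈ Aᶜ := himg' ▸ Finset.mem_image_of_mem m (Finset.mem_compl.mpr hx)
    exact Finset.mem_compl.mp this
  have memiff : ∀ x, x ∈ R ↔ m x ∈ A := by
    intro x
    constructor
    · exact memA x
    · intro h; by_contra hx; exact memA' x hx h
  constructor
  · rintro ⟨hg, hb⟩
    have hmj : m (m.symm i) = i := m.apply_symm_apply i
    have hji : (m.symm i).val ≤ i.val := by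
      rw [← card_univ_filter_lt (m.symm i), ← card_univ_filter_lt i]
      apply Finset.card_le_card_of_injOn m
      · intro x hx
        simp only [Finset.mem_coe, Finset.mem_filter, Finset.mem_univ, true_and] at hx ⊢
        exact hg x hx
      · exact m.injective.injOn
    have hij : i.val ≤ (m.symm i).val := by
      rw [← card_univ_filter_lt (m.symm i), ← card_univ_filter_lt i]
      apply Finset.card_le_card_of_injOn m.symm
      · intro x hx
        simp only [Finset.mem_coe, Finset.mem_filter, Finset.mem_univ, true_and] at hx ⊢
        have hx' : x < m (m.symm i) := by rw [hmj]; exact hx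
        exact hb x hx'
      · exact m.symm.injective.injOn
    have hsi : m.symm i = i := Fin.ext (le_antisymm hji hij)
    have hmi : m i = i := (congrArg m hsi).symm.trans hmj
    have himg2 : (R.filter (fun x => x < i)).image m = A.filter (fun x => x < i) := by
      ext a
      simp only [Finset.mem_image, Finset.mem_filter]
      constructor
      · rintro ⟨x, ⟨hxR, hxi⟩, rfl⟩
        have hxi' : x < m.symm i := by rw [hsi]; exact hxi
        exact ⟨memA x hxR, hg x hxi'⟩
      · rintro ⟨haA, hai⟩
        refine ⟨m.symm a, ⟨?_, ?_⟩, m.apply_symm_apply a⟩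
        · rw [memiff, m.apply_symm_apply]; exact haA
        · have hai' : a < m (m.symm i) := by rw [hmj]; exact hai
          have := hb a hai'
          rw [hsi] at this
          exact this
    have h1 : (R.filter (fun x => x < i)).card = (A.filter (fun x => x < i)).card := by
      rw [← himg2, Finset.card_image_of_injective _ m.injective]
    have hiRA : (i ∈ R) ↔ (i ∈ A) := by rw [memiff, hmi]
    have sR := card_split R i
    have sA := card_split A i
    rw [hA] at sA; rw [hR] at sR
    refine ⟨h1, ?_⟩
    by_cases hiR : i ∈ R
    · rw [if_pos hiR] at sR; rw [if_pos (hiRA.mp hiR)] at sA; omega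
    · rw [if_neg hiR] at sR; rw [if_neg (fun h => hiR (hiRA.mpr h))] at sA; omega
  · rintro ⟨h1, h2⟩
    have sR := card_split R i
    have sA := card_split A i
    rw [hA] at sA; rw [hR] at sR
    have hiRA : (i ∈ R) ↔ (i ∈ A) := by
      by_cases hiR : i ∈ R <;> by_cases hiA : i ∈ A <;>
        simp only [hiR, hiA, if_true, if_false, iff_true, iff_false] at sR sA ⊢ <;>
        first
          | trivial
          | omega
          | (intro h; omega)
          | exact fun h => by omega
    have h1' : (Rᶜ.filter (fun x => x < i)).card = (Aᶜ.filter (fun x => x < i)).card := by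
      rw [card_compl_filter, card_compl_filter, h1]
    have hmi : m i = i := by
      by_cases hiR : i ∈ R
      · have := rank_map hmono himg hiR
        rw [h1] at this
        exact (rank_inj (hiRA.mp hiR) (memA i hiR) this).symm
      · have hiR' : i ∈ Rᶜ := Finset.mem_compl.mpr hiR
        have := rank_map hmono' himg' hiR'
        rw [h1'] at this
        have hmA' : m i ∈ Aᶜ := himg' ▸ Finset.mem_image_of_mem m hiR'
        exact (rank_inj (Finset.mem_compl.mpr (fun h => hiR (hiRA.mpr h))) hmA' this).symm
    have hsi : m.symm i = i := by
      have := congrArg m.symm hmi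
      rw [m.symm_apply_apply] at this
      exact this.symm
    constructor
    · intro x hx
      rw [hsi] at hx
      by_cases hxR : x ∈ R
      · apply lt_of_rank_lt (S := A)
        rw [← rank_map hmono himg hxR, ← h1]
        exact rank_lt hxR hx
      · apply lt_of_rank_lt (S := Aᶜ)
        rw [← rank_map hmono' himg' (Finset.mem_compl.mpr hxR), ← h1']
        exact rank_lt (Finset.mem_compl.mpr hxR) hx
    · intro a ha
      rw [m.apply_symm_apply] at ha
      rw [hsi]
      have hmx : m (m.symm a) = a := m.apply_symm_apply a
      by_cases hxR : m.symm a ∈ R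
      · apply lt_of_rank_lt (S := R)
        rw [h1]
        have := rank_map hmono himg hxR
        rw [hmx] at this
        rw [this]
        exact rank_lt (hmx ▸ memA _ hxR) ha
      · apply lt_of_rank_lt (S := Rᶜ)
        rw [h1']
        have hxR' : m.symm a ∈ Rᶜ := Finset.mem_compl.mpr hxR
        have := rank_map hmono' himg' hxR'
        rw [hmx] at this
        rw [this]
        have haA' : a ∈ Aᶜ := hmx ▸ (himg' ▸ Finset.mem_image_of_mem m hxR')
        exact rank_lt haA' ha
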